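/- In the algebra of point distributions U_F of a formal supergroup F = (R̂_{p|q}, Δ, ε), the dual basis elements ξ_α (dual to the monomials X^α = x_1^{i_1}⋯x_p^{i_p}φ_1^{j_1}⋯φ_q^{j_q}) satisfy the product formula ξ_α · ξ_β = (−1)^{\bar{α}\bar{β}} (binom(α_1+β_1, α_1)) ξ_{α+β} + lower degree terms, where the lower degree terms contain no constant term; consequently the elements ξ_α with |α| = 1 generate U_F as a superalgebra. -/

import Mathlib

/-!
STATEMENT 6 (Point distributions of a formal supergroup).

A formal supergroup `F = (R̂_{p|q}, Δ, ε)` is a complete topological Hopf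
superalgebra structure on `R̂_{p|q} = ℂ[[x_1,…,x_p]] ⊗ Λ(φ_1,…,φ_q)`.  We
encode it by its comultiplication structure constants
`c γ α β` = (coefficient of `X^α ⊗ X^β` in `Δ(X^γ)`), where `X^α` runs over
the topological basis of monomials indexed by
`α ∈ S = ℕ^p × {0,1}^q`.  The axioms below say: `Δ` is continuous (`hcont`),
counital with counit `ε = ξ_0` (`hcounitl`, `hcounitr`), unital
(`hone`, i.e. `Δ(1) = 1 ⊗ 1`), coassociative (`hcoassoc`), and a homomorphism
of superalgebras `R̂_{p|q} → R̂_{p|q} ⊗̂ R̂_{p|q}` (`hhom`, with all Koszul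
signs made explicit).

The space of point distributions `U_F` is the continuous dual, i.e. the space
`S →₀ ℂ` spanned by the dual basis `ξ_α`, with the convolution product `mu`
dual to `Δ` (with the Koszul sign `(−1)^{p(α)p(β)}`).

The statement: the product satisfies
`ξ_α · ξ_β = (−1)^{p(α)p(β)} binom(α₁+β₁, α₁) ξ_{α+β} + (lower degree terms)`
(with the sign from reordering the odd variables, `ξ_{α+β} = 0` if the odd
parts of `α` and `β` overlap), the lower degree terms contain no constant
term `ξ_0`; and consequently the `ξ_α` with `|α| = 1` generate `U_F` as a
superalgebra.
-/

namespace Stmt6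

variable (p q : ℕ)

/-- Monomial indices `S = ℕ^p × {0,1}^q`. -/
abbrev SIdx := (Fin p →₀ ℕ) × (Fin q → Bool)

variable {p q}

def zeroIdx : SIdx p q := (0, fun _ => false)

/-- Number of odd variables occurring in `α` (its parity is `p(α)`). -/
def oddCard (α : SIdx p q) : ℕ := (Finset.univ.filter fun j => α.2 j = true).card

/-- Total degree `|α| = |α₁| + |α₂|`. -/
def deg (α : SIdx p q) : ℕ := (α.1.sum fun _ v => v) + oddCard α

/-- Koszul sign `(−1)^{p(α) p(β)}`. -/
def koz (α β : SIdx p q) : ℂ := (-1 : ℂ) ^ (oddCard α * oddCard β)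

/-- Reordering sign of `θ^a θ^b ↦ θ^{a ∪ b}` (odd variables in increasing
order): `(−1)^{#{(i,j) : j < i, i ∈ a, j ∈ b}}`. -/
def sgn (a b : Fin q → Bool) : ℂ :=
  (-1 : ℂ) ^ (Finset.univ.filter
    fun ij : Fin q × Fin q => ij.2 < ij.1 ∧ a ij.1 = true ∧ b ij.2 = true).card

def oddDisjoint (a b : Fin q → Bool) : Prop := ∀ j, ¬(a j = true ∧ b j = true)

instance {a b : Fin q → Bool} : Decidable (oddDisjoint a b) := by
  unfold oddDisjoint; infer_instance

/-- Product of monomial indices (`X^α · X^β = ± X^{merge α β}`). -/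
noncomputable def merge (α β : SIdx p q) : SIdx p q := (α.1 + β.1, fun j => α.2 j || β.2 j)

/-- Structure constant of the product of `R̂_{p|q}`:
`comb α₁ α₂ α` is the coefficient with which `X^{α₁} ⋅ X^{α₂}` contributes
to `X^α`. -/
noncomputable def comb (α₁ α₂ α : SIdx p q) : ℂ :=
  if α₁.1 + α₂.1 = α.1 ∧ oddDisjoint α₁.2 α₂.2 ∧ (∀ j, α.2 j = (α₁.2 j || α₂.2 j))
  then sgn α₁.2 α₂.2 else 0

/-- `binom (α₁ + β₁, α₁) = ∏_i binom (α₁ᵢ + β₁ᵢ, α₁ᵢ)`. -/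
noncomputable def binomC (α β : SIdx p q) : ℂ :=
  ∏ i : Fin p, ((α.1 i + β.1 i).choose (α.1 i) : ℂ)

/-- The Dirac distribution `ξ_α` as a plain function. -/
noncomputable def xi (α : SIdx p q) : SIdx p q → ℂ := fun γ => if γ = α then 1 else 0

/-- The convolution product on point distributions, dual to `Δ`:
`(x · y)(X^γ) = (x ⊗ y)(Δ X^γ)` with the Koszul sign of the dual pairing. -/
noncomputable def mu (c : SIdx p q → SIdx p q → SIdx p q → ℂ)
    (x y : SIdx p q → ℂ) : SIdx p q → ℂ := fun γ =>
  ∑ᶠ ab : SIdx p q × SIdx p q, koz ab.1 ab.2 * x ab.1 * y ab.2 * c γ ab.1 ab.2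

/-- Iterated products of degree-one `ξ`'s : `M c n` is the set of products
`ξ_{α_1} ⋯ ξ_{α_n} ξ_0` with `|α_i| = 1`. -/
noncomputable def M (c : SIdx p q → SIdx p q → SIdx p q → ℂ) : ℕ → Set (SIdx p q → ℂ)
  | 0 => {xi zeroIdx}
  | n + 1 => {u | ∃ α : SIdx p q, deg α = 1 ∧ ∃ v ∈ M c n, u = mu c (xi α) v}

end Stmt6

namespace Stmt6

variable {p q : ℕ}


lemma sumval_zero : ((0 : Fin p →₀ ℕ).sum fun _ v => v) = 0 := by simp

lemma sumval_add (f g : Fin p →₀ ℕ) :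
    ((f + g).sum fun _ v => v) = (f.sum fun _ v => v) + (g.sum fun _ v => v) :=
  Finsupp.sum_add_index' (fun _ => rfl) (fun _ _ _ => rfl)

lemma sumval_eq_zero_iff (f : Fin p →₀ ℕ) : (f.sum fun _ v => v) = 0 ↔ f = 0 := by
  rw [Finsupp.sum]
  constructor
  · intro h
    ext i
    by_cases hi : f i = 0
    · simp [hi]
    · exact absurd ((Finset.sum_eq_zero_iff.1 h) i (Finsupp.mem_support_iff.2 hi)) hi
  · intro h; simp [h]

lemma oddCard_zeroIdx : oddCard (zeroIdx : SIdx p q) = 0 := by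
  simp [oddCard, zeroIdx]

lemma oddCard_eq_zero_iff (α : SIdx p q) : oddCard α = 0 ↔ ∀ j, α.2 j = false := by
  unfold oddCard
  rw [Finset.card_eq_zero, Finset.filter_eq_empty_iff]
  constructor
  · intro h j
    have := h (Finset.mem_univ j); simpa using this
  · intro h j _; simp [h j]

lemma deg_eq_zero_iff (α : SIdx p q) : deg α = 0 ↔ α = zeroIdx := by
  unfold deg
  constructor
  · intro h
    have h1 : (α.1.sum fun _ v => v) = 0 := by omega
    have h2 : oddCard α = 0 := by omega
    have he := (sumval_eq_zero_iff _).1 h1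
    have ho := (oddCard_eq_zero_iff _).1 h2
    exact Prod.ext he (funext ho)
  · rintro rfl; simp [zeroIdx, oddCard_zeroIdx, sumval_zero, oddCard]

lemma oddCard_merge (α β : SIdx p q) (h : oddDisjoint α.2 β.2) :
    oddCard (merge α β) = oddCard α + oddCard β := by
  unfold oddCard merge
  rw [← Finset.card_union_of_disjoint]
  · congr 1
    ext j
    simp only [Finset.mem_filter, Finset.mem_univ, true_and, Finset.mem_union, Bool.or_eq_true]
  · rw [Finset.disjoint_filter]
    intro j _ hj1 hj2
    exact h j ⟨hj1, hj2⟩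

lemma deg_merge (α β : SIdx p q) (h : oddDisjoint α.2 β.2) :
    deg (merge α β) = deg α + deg β := by
  unfold deg
  rw [oddCard_merge _ _ h]
  show ((α.1 + β.1).sum fun _ v => v) + _ = _
  rw [sumval_add]; ring


lemma sgn_mul_self (a b : Fin q → Bool) : sgn a b * sgn a b = 1 := by
  unfold sgn; rw [← pow_add, ← two_mul, pow_mul]; norm_num

lemma sgn_false_left (b : Fin q → Bool) : sgn (fun _ => false) b = 1 := by
  unfold sgn
  rw [show (Finset.univ.filter fun ij : Fin q × Fin q =>
      ij.2 < ij.1 ∧ (fun _ => false) ij.1 = true ∧ b ij.2 = true) = ∅ from ?_, Finset.card_empty,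
    pow_zero]
  rw [Finset.filter_eq_empty_iff]; intro ij _; simp

lemma sgn_false_right (a : Fin q → Bool) : sgn a (fun _ => false) = 1 := by
  unfold sgn
  rw [show (Finset.univ.filter fun ij : Fin q × Fin q =>
      ij.2 < ij.1 ∧ a ij.1 = true ∧ (fun _ => false) ij.2 = true) = ∅ from ?_, Finset.card_empty,
    pow_zero]
  rw [Finset.filter_eq_empty_iff]; intro ij _; simp

lemma sgn_or_left (a b c : Fin q → Bool) (h : oddDisjoint a b) :
    sgn (fun k => a k || b k) c = sgn a c * sgn b c := by
  unfold sgn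
  rw [← pow_add, ← Finset.card_union_of_disjoint ?_, show
    (Finset.univ.filter fun ij : Fin q × Fin q =>
        ij.2 < ij.1 ∧ a ij.1 = true ∧ c ij.2 = true) ∪
      (Finset.univ.filter fun ij : Fin q × Fin q =>
        ij.2 < ij.1 ∧ b ij.1 = true ∧ c ij.2 = true) =
    Finset.univ.filter fun ij : Fin q × Fin q =>
        ij.2 < ij.1 ∧ (fun k => a k || b k) ij.1 = true ∧ c ij.2 = true from ?_]
  · ext ij
    simp only [Finset.mem_filter, Finset.mem_univ, true_and, Finset.mem_union, Bool.or_eq_true]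
    tauto
  · rw [Finset.disjoint_filter]
    rintro ij _ ⟨_, h1, _⟩ ⟨_, h2, _⟩
    exact h ij.1 ⟨h1, h2⟩

lemma sgn_or_right (a b c : Fin q → Bool) (h : oddDisjoint b c) :
    sgn a (fun k => b k || c k) = sgn a b * sgn a c := by
  unfold sgn
  rw [← pow_add, ← Finset.card_union_of_disjoint ?_, show
    (Finset.univ.filter fun ij : Fin q × Fin q =>
        ij.2 < ij.1 ∧ a ij.1 = true ∧ b ij.2 = true) ∪
      (Finset.univ.filter fun ij : Fin q × Fin q =>
        ij.2 < ij.1 ∧ a ij.1 = true ∧ c ij.2 = true) =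
    Finset.univ.filter fun ij : Fin q × Fin q =>
        ij.2 < ij.1 ∧ a ij.1 = true ∧ (fun k => b k || c k) ij.2 = true from ?_]
  · ext ij
    simp only [Finset.mem_filter, Finset.mem_univ, true_and, Finset.mem_union, Bool.or_eq_true]
    tauto
  · rw [Finset.disjoint_filter]
    rintro ij _ ⟨_, _, h1⟩ ⟨_, _, h2⟩
    exact h ij.2 ⟨h1, h2⟩

lemma sgn_single_right (j : Fin q) (s : Fin q → Bool) (h : ∀ k, s k = true → ¬ k < j) :
    sgn (fun k => decide (k = j)) s = 1 := by
  unfold sgn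
  rw [show (Finset.univ.filter fun ij : Fin q × Fin q =>
      ij.2 < ij.1 ∧ (fun k => decide (k = j)) ij.1 = true ∧ s ij.2 = true) = ∅ from ?_,
    Finset.card_empty, pow_zero]
  rw [Finset.filter_eq_empty_iff]
  rintro ij _ ⟨hlt, h1, h2⟩
  simp only [decide_eq_true_iff] at h1
  exact h ij.2 h2 (h1 ▸ hlt)

lemma sgn_single_left (j : Fin q) (s : Fin q → Bool) (h : ∀ k, s k = true → j < k) :
    sgn s (fun k => decide (k = j)) =
      (-1 : ℂ) ^ (Finset.univ.filter fun k => s k = true).card := by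
  unfold sgn
  congr 1
  rw [show (Finset.univ.filter fun k => s k = true)
      = (Finset.univ.filter fun ij : Fin q × Fin q =>
          ij.2 < ij.1 ∧ s ij.1 = true ∧ (fun k => decide (k = j)) ij.2 = true).image
            Prod.fst from ?_]
  · rw [Finset.card_image_of_injOn]
    rintro ⟨x1, x2⟩ hx ⟨y1, y2⟩ hy hxy
    simp only [Finset.mem_coe, Finset.mem_filter, decide_eq_true_iff] at hx hy
    obtain ⟨_, _, _, hx2⟩ := hx
    obtain ⟨_, _, _, hy2⟩ := hy
    simp only at hxy
    exact Prod.ext hxy (hx2.trans hy2.symm)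
  · ext i
    simp only [Finset.mem_filter, Finset.mem_univ, true_and, Finset.mem_image,
      decide_eq_true_iff]
    constructor
    · intro hi
      exact ⟨(i, j), ⟨h i hi, hi, rfl⟩, rfl⟩
    · rintro ⟨⟨x1, x2⟩, ⟨_, hs, _⟩, rfl⟩
      exact hs


lemma merge_zero_left (β : SIdx p q) : merge zeroIdx β = β := by
  refine Prod.ext ?_ (funext fun j => ?_)
  · show 0 + β.1 = β.1; exact zero_add _
  · show (false || β.2 j) = β.2 j; exact Bool.false_or _

lemma merge_zero_right (α : SIdx p q) : merge α zeroIdx = α := by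
  refine Prod.ext ?_ (funext fun j => ?_)
  · show α.1 + 0 = α.1; exact add_zero _
  · show (α.2 j || false) = α.2 j; exact Bool.or_false _

lemma oddDisjoint_false_left (b : Fin q → Bool) :
    oddDisjoint (fun _ => false) b := by intro j h; simp at h

lemma oddDisjoint_false_right (a : Fin q → Bool) :
    oddDisjoint a (fun _ => false) := by intro j h; simp at h

lemma binomC_zero_left (β : SIdx p q) : binomC zeroIdx β = 1 := by
  unfold binomC zeroIdx; simp

lemma binomC_zero_right (α : SIdx p q) : binomC α zeroIdx = 1 := by
  unfold binomC zeroIdx; simp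

lemma comb_zero_left (β α : SIdx p q) : comb zeroIdx β α = if β = α then 1 else 0 := by
  unfold comb
  by_cases h : β = α
  · subst h
    rw [if_pos, if_pos rfl]
    · show sgn (fun _ => false) β.2 = 1
      exact sgn_false_left _
    · exact ⟨zero_add _, oddDisjoint_false_left _, fun j => (Bool.false_or _).symm⟩
  · rw [if_neg, if_neg h]
    rintro ⟨h1, _, h3⟩
    refine h (Prod.ext ?_ (funext fun j => ?_))
    · rw [← h1]; exact (zero_add _).symm
    · rw [h3 j]; exact (Bool.false_or _).symm

lemma comb_zero_right (β α : SIdx p q) : comb β zeroIdx α = if β = α then 1 else 0 := by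
  unfold comb
  by_cases h : β = α
  · subst h
    rw [if_pos, if_pos rfl]
    · show sgn β.2 (fun _ => false) = 1
      exact sgn_false_right _
    · exact ⟨add_zero _, oddDisjoint_false_right _, fun j => (Bool.or_false _).symm⟩
  · rw [if_neg, if_neg h]
    rintro ⟨h1, _, h3⟩
    refine h (Prod.ext ?_ (funext fun j => ?_))
    · rw [← h1]; exact (add_zero _).symm
    · rw [h3 j]; exact (Bool.or_false _).symm

lemma comb_eq_merge (α₁ α₂ α : SIdx p q) :
    comb α₁ α₂ α =
      if oddDisjoint α₁.2 α₂.2 ∧ α = merge α₁ α₂ then sgn α₁.2 α₂.2 else 0 := by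
  unfold comb
  refine if_congr ?_ rfl rfl
  constructor
  · rintro ⟨h1, h2, h3⟩
    exact ⟨h2, Prod.ext h1.symm (funext fun j => h3 j)⟩
  · rintro ⟨h2, rfl⟩
    exact ⟨rfl, h2, fun j => rfl⟩

/-- "difference" of indices. -/
noncomputable def sub (α γ₁ : SIdx p q) : SIdx p q :=
  (α.1 - γ₁.1, fun k => α.2 k && !(γ₁.2 k))

lemma oddDisjoint_sub (γ₁ α : SIdx p q) : oddDisjoint γ₁.2 (sub α γ₁).2 := by
  intro k hk
  obtain ⟨h1, h2⟩ := hk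
  simp [sub, h1] at h2

lemma sub_merge (γ₁ b : SIdx p q) (h : oddDisjoint γ₁.2 b.2) : sub (merge γ₁ b) γ₁ = b := by
  refine Prod.ext ?_ (funext fun k => ?_)
  · show γ₁.1 + b.1 - γ₁.1 = b.1
    exact add_tsub_cancel_left _ _
  · show ((γ₁.2 k || b.2 k) && !(γ₁.2 k)) = b.2 k
    rcases hk1 : γ₁.2 k with _ | _
    · simp
    · have : b.2 k = false := by
        rcases hk2 : b.2 k with _ | _
        · rfl
        · exact absurd ⟨hk1, hk2⟩ (h k)
      simp [this]

lemma mu_xi_xi (c : SIdx p q → SIdx p q → SIdx p q → ℂ) (α β γ : SIdx p q) :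
    mu c (xi α) (xi β) γ = koz α β * c γ α β := by
  unfold mu
  rw [finsum_eq_single _ (α, β)]
  · simp [xi]
  · rintro ⟨a, b⟩ hab
    have : a ≠ α ∨ b ≠ β := by
      by_contra hc
      push_neg at hc
      exact hab (Prod.ext hc.1 hc.2)
    rcases this with h | h
    · simp [xi, h]
    · simp [xi, h]


lemma step (c : SIdx p q → SIdx p q → SIdx p q → ℂ)
    (hcounitl : ∀ γ β : SIdx p q, c γ zeroIdx β = if γ = β then 1 else 0)
    (hcounitr : ∀ γ α : SIdx p q, c γ α zeroIdx = if γ = α then 1 else 0)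
    (hhom : ∀ γ γ' α β : SIdx p q,
      (if oddDisjoint γ.2 γ'.2 then sgn γ.2 γ'.2 * c (merge γ γ') α β else 0)
        = ∑ᶠ x : (SIdx p q × SIdx p q) × SIdx p q × SIdx p q,
            comb x.1.1 x.1.2 α * comb x.2.1 x.2.2 β *
              ((-1 : ℂ) ^ (oddCard x.2.1 * oddCard x.1.2)) *
              c γ x.1.1 x.2.1 * c γ' x.1.2 x.2.2)
    (n : ℕ)
    (IH : ∀ m, m < n → ∀ γ α β : SIdx p q, deg γ = m → deg α + deg β ≤ m →
      c γ α β = if oddDisjoint α.2 β.2 ∧ γ = merge α β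
        then sgn α.2 β.2 * binomC α β else 0)
    (γ₁ γ₂ α β : SIdx p q) (hdisj : oddDisjoint γ₁.2 γ₂.2)
    (hd1 : deg γ₁ = 1) (hd2 : deg γ₂ + 1 = n) (hab : deg α + deg β ≤ n) :
    sgn γ₁.2 γ₂.2 * c (merge γ₁ γ₂) α β =
      comb γ₁ (sub α γ₁) α * c γ₂ (sub α γ₁) β
        + (-1 : ℂ) ^ (oddCard γ₁ * oddCard α) * comb γ₁ (sub β γ₁) β
            * c γ₂ α (sub β γ₁) := by
  classical
  have hγ₁0 : γ₁ ≠ zeroIdx := by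
    intro h
    have := (deg_eq_zero_iff γ₁).2 h
    omega
  let F : (SIdx p q × SIdx p q) × SIdx p q × SIdx p q → ℂ := fun x =>
    comb x.1.1 x.1.2 α * comb x.2.1 x.2.2 β *
      ((-1 : ℂ) ^ (oddCard x.2.1 * oddCard x.1.2)) *
      c γ₁ x.1.1 x.2.1 * c γ₂ x.1.2 x.2.2
  let pt1 : (SIdx p q × SIdx p q) × SIdx p q × SIdx p q := ((γ₁, sub α γ₁), (zeroIdx, β))
  let pt2 : (SIdx p q × SIdx p q) × SIdx p q × SIdx p q := ((zeroIdx, α), (γ₁, sub β γ₁))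
  have hsupp : Function.support F ⊆ ↑({pt1, pt2} : Finset _) := by
    rintro ⟨⟨a₁, a₂⟩, b₁, b₂⟩ hx
    rw [Function.mem_support] at hx
    have h1 : comb a₁ a₂ α ≠ 0 := fun h => hx (by show comb a₁ a₂ α * _ * _ * _ * _ = 0; rw [h]; ring)
    have h2 : comb b₁ b₂ β ≠ 0 := fun h => hx (by show _ * comb b₁ b₂ β * _ * _ * _ = 0; rw [h]; ring)
    have h4 : c γ₁ a₁ b₁ ≠ 0 := fun h => hx (by show _ * _ * _ * c γ₁ a₁ b₁ * _ = 0; rw [h]; ring)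
    have h5 : c γ₂ a₂ b₂ ≠ 0 := fun h => hx (by show _ * _ * _ * _ * c γ₂ a₂ b₂ = 0; rw [h]; ring)
    rw [comb_eq_merge] at h1 h2
    by_cases hc1 : oddDisjoint a₁.2 a₂.2 ∧ α = merge a₁ a₂
    swap
    · exact absurd (if_neg hc1) h1
    by_cases hc2 : oddDisjoint b₁.2 b₂.2 ∧ β = merge b₁ b₂
    swap
    · exact absurd (if_neg hc2) h2
    simp only [Finset.coe_insert, Finset.coe_singleton, Set.mem_insert_iff,
      Set.mem_singleton_iff]
    by_cases ha₁ : a₁ = zeroIdx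
    · subst ha₁
      rw [hcounitl] at h4
      have hb₁ : γ₁ = b₁ := by
        by_contra hne
        exact h4 (if_neg hne)
      have ha₂ : a₂ = α := (hc1.2.trans (merge_zero_left a₂)).symm
      have hb₂ : b₂ = sub β γ₁ := by
        rw [hc2.2, ← hb₁, sub_merge _ _ (hb₁ ▸ hc2.1)]
      right
      rw [ha₂, hb₂, ← hb₁]
    by_cases hb₁0 : b₁ = zeroIdx
    · subst hb₁0
      rw [hcounitr] at h4
      have ha₁' : γ₁ = a₁ := by
        by_contra hne
        exact h4 (if_neg hne)
      have hb₂ : b₂ = β := (hc2.2.trans (merge_zero_left b₂)).symm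
      have ha₂ : a₂ = sub α γ₁ := by
        rw [hc1.2, ← ha₁', sub_merge _ _ (ha₁' ▸ hc1.1)]
      left
      rw [ha₂, hb₂, ← ha₁']
    · exfalso
      have hda₁ : deg a₁ ≠ 0 := fun h => ha₁ ((deg_eq_zero_iff a₁).1 h)
      have hdb₁ : deg b₁ ≠ 0 := fun h => hb₁0 ((deg_eq_zero_iff b₁).1 h)
      have hα : deg α = deg a₁ + deg a₂ := by rw [hc1.2, deg_merge _ _ hc1.1]
      have hβ : deg β = deg b₁ + deg b₂ := by rw [hc2.2, deg_merge _ _ hc2.1]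
      have h5' := IH (deg γ₂) (by omega) γ₂ a₂ b₂ rfl (by omega)
      rw [h5'] at h5
      by_cases hcc : oddDisjoint a₂.2 b₂.2 ∧ γ₂ = merge a₂ b₂
      · have : deg γ₂ = deg a₂ + deg b₂ := by rw [hcc.2, deg_merge _ _ hcc.1]
        omega
      · rw [if_neg hcc] at h5
        exact h5 rfl
  have hne : pt1 ≠ pt2 := by
    intro h
    exact hγ₁0 (congrArg (fun x => x.1.1) h)
  have hhγ := hhom γ₁ γ₂ α β
  rw [if_pos hdisj] at hhγ
  rw [hhγ]
  show ∑ᶠ x, F x = _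
  rw [finsum_eq_finset_sum_of_support_subset F hsupp, Finset.sum_pair hne]
  show comb γ₁ (sub α γ₁) α * comb zeroIdx β β *
      ((-1 : ℂ) ^ (oddCard (zeroIdx : SIdx p q) * oddCard (sub α γ₁))) *
      c γ₁ γ₁ zeroIdx * c γ₂ (sub α γ₁) β
    + comb zeroIdx α α * comb γ₁ (sub β γ₁) β *
      ((-1 : ℂ) ^ (oddCard γ₁ * oddCard α)) *
      c γ₁ zeroIdx γ₁ * c γ₂ α (sub β γ₁) = _
  rw [comb_zero_left, if_pos rfl, comb_zero_left, if_pos rfl, hcounitr, if_pos rfl,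
    hcounitl, if_pos rfl, oddCard_zeroIdx, zero_mul, pow_zero]
  ring


lemma pascal_nat (m l : ℕ) (h : 1 ≤ m + l) :
    (if 1 ≤ m then (m - 1 + l).choose (m - 1) else 0)
      + (if 1 ≤ l then (m + (l - 1)).choose m else 0) = (m + l).choose m := by
  rcases m with _ | m'
  · rcases l with _ | l'
    · omega
    · simp
  · rcases l with _ | l'
    · simp
    · rw [if_pos (by omega), if_pos (by omega)]
      have e1 : m' + 1 - 1 + (l' + 1) = m' + l' + 1 := by omega
      have e2 : m' + 1 + (l' + 1 - 1) = m' + l' + 1 := by omega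
      have e3 : m' + 1 + (l' + 1) = (m' + l' + 1) + 1 := by omega
      have e4 : m' + 1 - 1 = m' := by omega
      rw [e1, e2, e3, e4, Nat.choose_succ_succ (m' + l' + 1) m']

lemma pascal_cast (m l : ℕ) (h : 1 ≤ m + l) :
    (if 1 ≤ m then ((m - 1 + l).choose (m - 1) : ℂ) else 0)
      + (if 1 ≤ l then ((m + (l - 1)).choose m : ℂ) else 0) = ((m + l).choose m : ℂ) := by
  have := pascal_nat m l h
  by_cases hm : 1 ≤ m <;> by_cases hl : 1 ≤ l <;>
    simp only [hm, hl, if_pos, if_neg, if_true, if_false, not_true, not_false_iff,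
      add_zero, zero_add] at this ⊢ <;> exact_mod_cast this

lemma binomC_split (α β : SIdx p q) (i : Fin p) :
    binomC α β = ((α.1 i + β.1 i).choose (α.1 i) : ℂ)
      * ∏ k ∈ Finset.univ.erase i, ((α.1 k + β.1 k).choose (α.1 k) : ℂ) := by
  unfold binomC
  rw [← Finset.mul_prod_erase Finset.univ _ (Finset.mem_univ i)]

lemma binomC_sub_left (α β : SIdx p q) (i : Fin p) :
    binomC (sub α (Finsupp.single i 1, fun _ => false)) β
      = ((α.1 i - 1 + β.1 i).choose (α.1 i - 1) : ℂ)
        * ∏ k ∈ Finset.univ.erase i, ((α.1 k + β.1 k).choose (α.1 k) : ℂ) := by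
  unfold binomC sub
  rw [← Finset.mul_prod_erase Finset.univ _ (Finset.mem_univ i)]
  congr 1
  · simp
  · apply Finset.prod_congr rfl
    intro k hk
    have hne : k ≠ i := Finset.ne_of_mem_erase hk
    simp [Finsupp.tsub_apply, Finsupp.single_eq_of_ne' (Ne.symm hne)]

lemma binomC_sub_right (α β : SIdx p q) (i : Fin p) :
    binomC α (sub β (Finsupp.single i 1, fun _ => false))
      = ((α.1 i + (β.1 i - 1)).choose (α.1 i) : ℂ)
        * ∏ k ∈ Finset.univ.erase i, ((α.1 k + β.1 k).choose (α.1 k) : ℂ) := by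
  unfold binomC sub
  rw [← Finset.mul_prod_erase Finset.univ _ (Finset.mem_univ i)]
  congr 1
  · simp
  · apply Finset.prod_congr rfl
    intro k hk
    have hne : k ≠ i := Finset.ne_of_mem_erase hk
    simp [Finsupp.tsub_apply, Finsupp.single_eq_of_ne' (Ne.symm hne)]

lemma pascal_binomC (α β : SIdx p q) (i : Fin p) (h : 1 ≤ α.1 i + β.1 i) :
    (if 1 ≤ α.1 i then binomC (sub α (Finsupp.single i 1, fun _ => false)) β else 0)
      + (if 1 ≤ β.1 i then binomC α (sub β (Finsupp.single i 1, fun _ => false)) else 0)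
      = binomC α β := by
  rw [binomC_split α β i, binomC_sub_left α β i, binomC_sub_right α β i, ← pascal_cast _ _ h,
    add_mul, ite_mul, zero_mul, ite_mul, zero_mul]


lemma merge_assoc (x y z : SIdx p q) : merge (merge x y) z = merge x (merge y z) := by
  refine Prod.ext (add_assoc _ _ _) (funext fun k => Bool.or_assoc _ _ _)

lemma merge_comm (x y : SIdx p q) : merge x y = merge y x := by
  refine Prod.ext (add_comm _ _) (funext fun k => Bool.or_comm _ _)

lemma oddDisjoint_comm {a b : Fin q → Bool} (h : oddDisjoint a b) : oddDisjoint b a :=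
  fun k hk => h k ⟨hk.2, hk.1⟩

lemma merge_snd_apply (x y : SIdx p q) (k : Fin q) : (merge x y).2 k = (x.2 k || y.2 k) := rfl

lemma merge_left_cancel (x y z : SIdx p q) (h1 : oddDisjoint x.2 y.2)
    (h2 : oddDisjoint x.2 z.2) (h : merge x y = merge x z) : y = z := by
  refine Prod.ext ?_ (funext fun k => ?_)
  · have := congrArg Prod.fst h
    exact add_left_cancel this
  · have hk := congrArg (fun w => w.2 k) h
    simp only [merge_snd_apply] at hk
    rcases hx : x.2 k with _ | _
    · rw [hx] at hk; simpa using hk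
    · have hy : y.2 k = false := by
        rcases hy : y.2 k with _ | _
        · rfl
        · exact absurd ⟨hx, hy⟩ (h1 k)
      have hz : z.2 k = false := by
        rcases hz : z.2 k with _ | _
        · rfl
        · exact absurd ⟨hx, hz⟩ (h2 k)
      rw [hy, hz]

lemma cond_cancel (γ₁ γ₂ α' β α γ : SIdx p q) (hγm : merge γ₁ γ₂ = γ)
    (hα : merge γ₁ α' = α) (hdγ : oddDisjoint γ₁.2 γ₂.2) (hdα : oddDisjoint γ₁.2 α'.2) :
    (oddDisjoint α'.2 β.2 ∧ γ₂ = merge α' β) ↔ (oddDisjoint α.2 β.2 ∧ γ = merge α β) := by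
  constructor
  · rintro ⟨hd, hm⟩
    have hγ₁β : oddDisjoint γ₁.2 β.2 := by
      rintro k ⟨h1, h2⟩
      refine hdγ k ⟨h1, ?_⟩
      rw [hm, merge_snd_apply, h2, Bool.or_true]
    refine ⟨?_, ?_⟩
    · rintro k ⟨h1, h2⟩
      rw [← hα, merge_snd_apply, Bool.or_eq_true] at h1
      rcases h1 with h1 | h1
      · exact hγ₁β k ⟨h1, h2⟩
      · exact hd k ⟨h1, h2⟩
    · rw [← hγm, hm, ← merge_assoc, hα]
  · rintro ⟨hd, hm⟩
    have hγ₁β : oddDisjoint γ₁.2 β.2 := by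
      rintro k ⟨h1, h2⟩
      refine hd k ⟨?_, h2⟩
      rw [← hα, merge_snd_apply, h1, Bool.true_or]
    refine ⟨?_, ?_⟩
    · rintro k ⟨h1, h2⟩
      refine hd k ⟨?_, h2⟩
      rw [← hα, merge_snd_apply, h1, Bool.or_true]
    · refine merge_left_cancel γ₁ _ _ hdγ ?_ ?_
      · rintro k ⟨h1, h2⟩
        rw [merge_snd_apply, Bool.or_eq_true] at h2
        rcases h2 with h2 | h2
        · exact hdα k ⟨h1, h2⟩
        · exact hγ₁β k ⟨h1, h2⟩
      · rw [hγm, hm, ← merge_assoc, hα]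

lemma cond_cancel' (γ₁ γ₂ β' β α γ : SIdx p q) (hγm : merge γ₁ γ₂ = γ)
    (hβ : merge γ₁ β' = β) (hdγ : oddDisjoint γ₁.2 γ₂.2) (hdβ : oddDisjoint γ₁.2 β'.2) :
    (oddDisjoint α.2 β'.2 ∧ γ₂ = merge α β') ↔ (oddDisjoint α.2 β.2 ∧ γ = merge α β) := by
  have h := cond_cancel γ₁ γ₂ β' α β γ hγm hβ hdγ hdβ
  constructor
  · rintro ⟨hd, hm⟩
    obtain ⟨hd2, hm2⟩ := h.1 ⟨oddDisjoint_comm hd, hm.trans (merge_comm _ _)⟩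
    exact ⟨oddDisjoint_comm hd2, hm2.trans (merge_comm _ _)⟩
  · rintro ⟨hd, hm⟩
    obtain ⟨hd2, hm2⟩ := h.2 ⟨oddDisjoint_comm hd, hm.trans (merge_comm _ _)⟩
    exact ⟨oddDisjoint_comm hd2, hm2.trans (merge_comm _ _)⟩


lemma term_eval (c : SIdx p q → SIdx p q → SIdx p q → ℂ) (n : ℕ)
    (IH : ∀ m, m < n → ∀ γ α β : SIdx p q, deg γ = m → deg α + deg β ≤ m →
      c γ α β = if oddDisjoint α.2 β.2 ∧ γ = merge α β
        then sgn α.2 β.2 * binomC α β else 0)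
    (γ₁ γ₂ α β γ : SIdx p q) (hγm : merge γ₁ γ₂ = γ) (hdγ : oddDisjoint γ₁.2 γ₂.2)
    (hd1 : deg γ₁ = 1) (hd2 : deg γ₂ + 1 = n) (hab : deg α + deg β ≤ n) :
    comb γ₁ (sub α γ₁) α * c γ₂ (sub α γ₁) β =
      if α = merge γ₁ (sub α γ₁) ∧ oddDisjoint α.2 β.2 ∧ γ = merge α β
      then sgn γ₁.2 (sub α γ₁).2 * sgn (sub α γ₁).2 β.2 * binomC (sub α γ₁) β
      else 0 := by
  rw [comb_eq_merge]
  by_cases hα : α = merge γ₁ (sub α γ₁)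
  · rw [if_pos ⟨oddDisjoint_sub γ₁ α, hα⟩]
    have hda : deg (sub α γ₁) + 1 = deg α := by
      have h := deg_merge γ₁ (sub α γ₁) (oddDisjoint_sub γ₁ α)
      rw [← hα] at h
      omega
    have hIH := IH (n - 1) (by omega) γ₂ (sub α γ₁) β (by omega) (by omega)
    rw [hIH, mul_ite, mul_zero]
    rw [if_congr (cond_cancel γ₁ γ₂ (sub α γ₁) β α γ hγm hα.symm hdγ
      (oddDisjoint_sub γ₁ α)) (mul_assoc _ _ _).symm rfl,
      if_congr (and_iff_right hα) rfl rfl]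
  · rw [if_neg (fun h => hα h.2), if_neg (fun h => hα h.1), zero_mul]

lemma term_eval' (c : SIdx p q → SIdx p q → SIdx p q → ℂ) (n : ℕ)
    (IH : ∀ m, m < n → ∀ γ α β : SIdx p q, deg γ = m → deg α + deg β ≤ m →
      c γ α β = if oddDisjoint α.2 β.2 ∧ γ = merge α β
        then sgn α.2 β.2 * binomC α β else 0)
    (γ₁ γ₂ α β γ : SIdx p q) (hγm : merge γ₁ γ₂ = γ) (hdγ : oddDisjoint γ₁.2 γ₂.2)
    (hd1 : deg γ₁ = 1) (hd2 : deg γ₂ + 1 = n) (hab : deg α + deg β ≤ n) :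
    comb γ₁ (sub β γ₁) β * c γ₂ α (sub β γ₁) =
      if β = merge γ₁ (sub β γ₁) ∧ oddDisjoint α.2 β.2 ∧ γ = merge α β
      then sgn γ₁.2 (sub β γ₁).2 * sgn α.2 (sub β γ₁).2 * binomC α (sub β γ₁)
      else 0 := by
  rw [comb_eq_merge]
  by_cases hβ : β = merge γ₁ (sub β γ₁)
  · rw [if_pos ⟨oddDisjoint_sub γ₁ β, hβ⟩]
    have hdb : deg (sub β γ₁) + 1 = deg β := by
      have h := deg_merge γ₁ (sub β γ₁) (oddDisjoint_sub γ₁ β)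
      rw [← hβ] at h
      omega
    have hIH := IH (n - 1) (by omega) γ₂ α (sub β γ₁) (by omega) (by omega)
    rw [hIH, mul_ite, mul_zero]
    rw [if_congr (cond_cancel' γ₁ γ₂ (sub β γ₁) β α γ hγm hβ.symm hdγ
      (oddDisjoint_sub γ₁ β)) (mul_assoc _ _ _).symm rfl,
      if_congr (and_iff_right hβ) rfl rfl]
  · rw [if_neg (fun h => hβ h.2), if_neg (fun h => hβ h.1), zero_mul]


lemma key (c : SIdx p q → SIdx p q → SIdx p q → ℂ)
    (hcounitl : ∀ γ β : SIdx p q, c γ zeroIdx β = if γ = β then 1 else 0)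
    (hcounitr : ∀ γ α : SIdx p q, c γ α zeroIdx = if γ = α then 1 else 0)
    (hhom : ∀ γ γ' α β : SIdx p q,
      (if oddDisjoint γ.2 γ'.2 then sgn γ.2 γ'.2 * c (merge γ γ') α β else 0)
        = ∑ᶠ x : (SIdx p q × SIdx p q) × SIdx p q × SIdx p q,
            comb x.1.1 x.1.2 α * comb x.2.1 x.2.2 β *
              ((-1 : ℂ) ^ (oddCard x.2.1 * oddCard x.1.2)) *
              c γ x.1.1 x.2.1 * c γ' x.1.2 x.2.2) :
    ∀ n, ∀ γ α β : SIdx p q, deg γ = n → deg α + deg β ≤ n →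
      c γ α β = if oddDisjoint α.2 β.2 ∧ γ = merge α β
        then sgn α.2 β.2 * binomC α β else 0 := by
  intro n
  induction n using Nat.strong_induction_on with
  | _ n IH =>
  intro γ α β hγ hab
  by_cases hα0 : α = zeroIdx
  · subst hα0
    rw [hcounitl γ β]
    have hd : oddDisjoint (zeroIdx : SIdx p q).2 β.2 := oddDisjoint_false_left _
    have h1 : sgn (zeroIdx : SIdx p q).2 β.2 = 1 := sgn_false_left _
    rw [merge_zero_left, h1, binomC_zero_left, one_mul, if_congr (and_iff_right hd) rfl rfl]
  by_cases hβ0 : β = zeroIdx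
  · subst hβ0
    rw [hcounitr γ α]
    have hd : oddDisjoint α.2 (zeroIdx : SIdx p q).2 := oddDisjoint_false_right _
    have h1 : sgn α.2 (zeroIdx : SIdx p q).2 = 1 := sgn_false_right _
    rw [merge_zero_right, h1, binomC_zero_right, one_mul, if_congr (and_iff_right hd) rfl rfl]
  have hdα : 1 ≤ deg α := Nat.one_le_iff_ne_zero.2 (fun h => hα0 ((deg_eq_zero_iff α).1 h))
  have hdβ : 1 ≤ deg β := Nat.one_le_iff_ne_zero.2 (fun h => hβ0 ((deg_eq_zero_iff β).1 h))
  by_cases hA : γ.1 = 0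
  · -- CASE B : odd generator
    have hsum0 : (γ.1.sum fun _ v => v) = 0 := (sumval_eq_zero_iff γ.1).2 hA
    have hocγ : 0 < oddCard γ := by
      unfold deg at hγ
      omega
    have hne : (Finset.univ.filter fun k => γ.2 k = true).Nonempty := by
      rw [← Finset.card_pos]
      exact hocγ
    set j := (Finset.univ.filter fun k => γ.2 k = true).min' hne with hjdef
    have hjmem : γ.2 j = true := by
      have := (Finset.univ.filter fun k => γ.2 k = true).min'_mem hne
      simpa using this
    have hmin : ∀ k, γ.2 k = true → j ≤ k := fun k hk =>
      Finset.min'_le _ k (by simpa using hk)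
    set g1 : SIdx p q := (0, fun k => decide (k = j)) with hg1
    set g2 : SIdx p q := (γ.1, fun k => γ.2 k && !(decide (k = j))) with hg2
    have hγm : merge g1 g2 = γ := by
      refine Prod.ext (zero_add _) (funext fun k => ?_)
      show (decide (k = j) || (γ.2 k && !(decide (k = j)))) = γ.2 k
      by_cases hk : k = j
      · subst hk; simp [hjmem]
      · simp [hk]
    have hdγ : oddDisjoint g1.2 g2.2 := by
      rintro k ⟨h1, h2⟩
      have h1' : decide (k = j) = true := h1
      have h2' : (γ.2 k && !(decide (k = j))) = true := h2
      rw [decide_eq_true_iff] at h1'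
      subst h1'
      simp at h2'
    have hd1 : deg g1 = 1 := by
      rw [hg1]
      unfold deg oddCard
      simp [Finset.filter_eq']
    have hd2 : deg g2 + 1 = n := by
      have h := deg_merge g1 g2 hdγ
      rw [hγm] at h; omega
    have hoc1 : oddCard g1 = 1 := by
      rw [hg1]; unfold oddCard; simp [Finset.filter_eq']
    have hstep := step c hcounitl hcounitr hhom n IH g1 g2 α β hdγ hd1 hd2 (by omega)
    have hsg : sgn g1.2 g2.2 = 1 := by
      refine sgn_single_right j _ fun k hk => ?_
      have hk' : (γ.2 k && !(decide (k = j))) = true := hk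
      have hk1 : γ.2 k = true := by
        rw [Bool.and_eq_true] at hk'
        exact hk'.1
      exact not_lt.2 (hmin k hk1)
    rw [hγm, hsg, one_mul, hoc1, one_mul, mul_assoc] at hstep
    rw [hstep, term_eval c n IH g1 g2 α β γ hγm hdγ hd1 hd2 (by omega),
      term_eval' c n IH g1 g2 α β γ hγm hdγ hd1 hd2 (by omega)]
    have hHα : (α = merge g1 (sub α g1)) ↔ α.2 j = true := by
      constructor
      · intro h
        have hk := congrArg (fun w => w.2 j) h
        have hk' : α.2 j = (decide (j = j) || (α.2 j && !(decide (j = j)))) := hk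
        simpa using hk'
      · intro h
        refine Prod.ext ?_ (funext fun k => ?_)
        · show α.1 = 0 + (α.1 - 0); simp
        · show α.2 k = (decide (k = j) || (α.2 k && !(decide (k = j))))
          by_cases hk : k = j
          · subst hk; simp [h]
          · simp [hk]
    have hHβ : (β = merge g1 (sub β g1)) ↔ β.2 j = true := by
      constructor
      · intro h
        have hk := congrArg (fun w => w.2 j) h
        have hk' : β.2 j = (decide (j = j) || (β.2 j && !(decide (j = j)))) := hk
        simpa using hk'
      · intro h
        refine Prod.ext ?_ (funext fun k => ?_)
        · show β.1 = 0 + (β.1 - 0); simp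
        · show β.2 k = (decide (k = j) || (β.2 k && !(decide (k = j))))
          by_cases hk : k = j
          · subst hk; simp [h]
          · simp [hk]
    rw [if_congr (and_congr_left' hHα) rfl rfl, if_congr (and_congr_left' hHβ) rfl rfl]
    by_cases hC : oddDisjoint α.2 β.2 ∧ γ = merge α β
    swap
    · rw [if_neg hC, if_neg (fun h => hC h.2), if_neg (fun h => hC h.2), mul_zero, add_zero]
    · rw [if_pos hC]
      have hγ2 : ∀ k, γ.2 k = (α.2 k || β.2 k) := fun k => congrArg (fun w => w.2 k) hC.2
      have horj : α.2 j = true ∨ β.2 j = true := by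
        have h := hγ2 j
        rw [hjmem] at h
        have h' := h.symm
        rw [Bool.or_eq_true] at h'
        exact h'
      have hminα : ∀ k, α.2 k = true → j ≤ k := fun k hk =>
        hmin k (by rw [hγ2 k, hk]; simp)
      have hminβ : ∀ k, β.2 k = true → j ≤ k := fun k hk =>
        hmin k (by rw [hγ2 k, hk]; simp)
      by_cases hαj : α.2 j = true
      · have hβj : ¬ β.2 j = true := fun h => hC.1 j ⟨hαj, h⟩
        rw [if_pos ⟨hαj, hC⟩, if_neg (fun h => hβj h.1), mul_zero, add_zero]
        have hsub1 : sgn g1.2 (sub α g1).2 = 1 := by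
          refine sgn_single_right j _ fun k hk => ?_
          have hk' : (α.2 k && !(g1.2 k)) = true := hk
          have hk1 : α.2 k = true := by
            rw [Bool.and_eq_true] at hk'
            exact hk'.1
          exact not_lt.2 (hminα k hk1)
        have hα2eq : α.2 = (merge g1 (sub α g1)).2 := congrArg Prod.snd (hHα.2 hαj)
        have hsplit : sgn α.2 β.2 = sgn g1.2 β.2 * sgn (sub α g1).2 β.2 := by
          conv_lhs => rw [hα2eq]
          exact sgn_or_left _ _ _ (oddDisjoint_sub g1 α)
        have hsgnβ1 : sgn g1.2 β.2 = 1 := by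
          refine sgn_single_right j _ fun k hk => ?_
          exact not_lt.2 (hminβ k hk)
        have hbin : binomC (sub α g1) β = binomC α β := by
          unfold binomC
          refine Finset.prod_congr rfl fun k _ => ?_
          have : (sub α g1).1 k = α.1 k := by
            show (α.1 - g1.1) k = α.1 k
            rw [hg1]
            simp
          rw [this]
        rw [hsub1, one_mul, hbin, hsplit, hsgnβ1, one_mul]
      · have hβj : β.2 j = true := horj.resolve_left hαj
        rw [if_neg (fun h => hαj h.1), if_pos ⟨hβj, hC⟩, zero_add]
        have hsub1 : sgn g1.2 (sub β g1).2 = 1 := by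
          refine sgn_single_right j _ fun k hk => ?_
          have hk' : (β.2 k && !(g1.2 k)) = true := hk
          have hk1 : β.2 k = true := by
            rw [Bool.and_eq_true] at hk'
            exact hk'.1
          exact not_lt.2 (hminβ k hk1)
        have hβ2eq : β.2 = (merge g1 (sub β g1)).2 := congrArg Prod.snd (hHβ.2 hβj)
        have hsplit : sgn α.2 β.2 = sgn α.2 g1.2 * sgn α.2 (sub β g1).2 := by
          conv_lhs => rw [hβ2eq]
          exact sgn_or_right _ _ _ (oddDisjoint_sub g1 β)
        have hsgnαg : sgn α.2 g1.2 = (-1 : ℂ) ^ oddCard α := by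
          refine sgn_single_left j α.2 fun k hk => ?_
          have h1 := hminα k hk
          have h2 : j ≠ k := fun he => hαj (he ▸ hk)
          exact lt_of_le_of_ne h1 h2
        have hbin : binomC α (sub β g1) = binomC α β := by
          unfold binomC
          refine Finset.prod_congr rfl fun k _ => ?_
          have : (sub β g1).1 k = β.1 k := by
            show (β.1 - g1.1) k = β.1 k
            rw [hg1]
            simp
          rw [this]
        rw [hsub1, one_mul, hbin, hsplit, hsgnαg]
        ring
  · -- CASE A : even generator
    have hex : ∃ i, γ.1 i ≠ 0 := by
      by_contra hno
      push_neg at hno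
      exact hA (Finsupp.ext fun k => by simpa using hno k)
    obtain ⟨i, hi⟩ := hex
    set g1 : SIdx p q := (Finsupp.single i 1, fun _ => false) with hg1
    set g2 : SIdx p q := (γ.1 - Finsupp.single i 1, γ.2) with hg2
    have hle : Finsupp.single i 1 ≤ γ.1 := Finsupp.single_le_iff.2 (by omega)
    have hγm : merge g1 g2 = γ :=
      Prod.ext (add_tsub_cancel_of_le hle) (funext fun k => Bool.false_or _)
    have hdγ : oddDisjoint g1.2 g2.2 := oddDisjoint_false_left _
    have hd1 : deg g1 = 1 := by
      rw [hg1]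
      unfold deg oddCard
      rw [Finsupp.sum_single_index rfl]
      simp
    have hd2 : deg g2 + 1 = n := by
      have h := deg_merge g1 g2 hdγ
      rw [hγm] at h
      omega
    have hstep := step c hcounitl hcounitr hhom n IH g1 g2 α β hdγ hd1 hd2 (by omega)
    have hsg : sgn g1.2 g2.2 = 1 := sgn_false_left _
    have hoc : oddCard g1 = 0 := by
      rw [hg1]; simp [oddCard]
    rw [hγm, hsg, one_mul, hoc, zero_mul, pow_zero, one_mul] at hstep
    rw [hstep, term_eval c n IH g1 g2 α β γ hγm hdγ hd1 hd2 (by omega),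
      term_eval' c n IH g1 g2 α β γ hγm hdγ hd1 hd2 (by omega)]
    have hsubα2 : (sub α g1).2 = α.2 :=
      funext fun k => by rw [hg1]; show (α.2 k && !false) = α.2 k; simp
    have hsubβ2 : (sub β g1).2 = β.2 :=
      funext fun k => by rw [hg1]; show (β.2 k && !false) = β.2 k; simp
    have hsgα : sgn g1.2 (sub α g1).2 = 1 := sgn_false_left _
    have hsgβ : sgn g1.2 (sub β g1).2 = 1 := sgn_false_left _
    have hHα : (α = merge g1 (sub α g1)) ↔ 1 ≤ α.1 i := by
      constructor
      · intro h
        have hk := congrArg (fun w => w.1 i) h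
        simp only [hg1, merge, sub, Finsupp.add_apply, Finsupp.tsub_apply,
          Finsupp.single_eq_same] at hk
        omega
      · intro h
        refine Prod.ext ?_ ?_
        · exact (add_tsub_cancel_of_le (Finsupp.single_le_iff.2 h)).symm
        · exact funext fun k => by show α.2 k = (false || (α.2 k && !false)); simp
    have hHβ : (β = merge g1 (sub β g1)) ↔ 1 ≤ β.1 i := by
      constructor
      · intro h
        have hk := congrArg (fun w => w.1 i) h
        simp only [hg1, merge, sub, Finsupp.add_apply, Finsupp.tsub_apply,
          Finsupp.single_eq_same] at hk
        omega
      · intro h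
        refine Prod.ext ?_ ?_
        · exact (add_tsub_cancel_of_le (Finsupp.single_le_iff.2 h)).symm
        · exact funext fun k => by show β.2 k = (false || (β.2 k && !false)); simp
    rw [hsgα, hsgβ, hsubα2, hsubβ2, one_mul,
      if_congr (and_congr_left' hHα) rfl rfl, if_congr (and_congr_left' hHβ) rfl rfl]
    by_cases hC : oddDisjoint α.2 β.2 ∧ γ = merge α β
    · rw [if_pos hC, if_congr (and_iff_left hC) rfl rfl, if_congr (and_iff_left hC) rfl rfl]
      have hsum : 1 ≤ α.1 i + β.1 i := by
        have hk := congrArg (fun w => w.1 i) hC.2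
        simp only [merge, Finsupp.add_apply] at hk
        omega
      rw [hg1, ← pascal_binomC α β i hsum, mul_add, mul_ite, mul_zero, mul_ite, mul_zero]
    · rw [if_neg hC, if_neg (fun h => hC h.2), if_neg (fun h => hC h.2), add_zero]

lemma xi_support_finite (α : SIdx p q) : (Function.support (xi α)).Finite := by
  apply Set.Finite.subset (Set.finite_singleton α)
  intro γ hγ
  rw [Function.mem_support] at hγ
  by_contra h
  rw [Set.mem_singleton_iff] at h
  exact hγ (if_neg h)

lemma mu_summand_support (c : SIdx p q → SIdx p q → SIdx p q → ℂ) (α γ : SIdx p q)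
    (y : SIdx p q → ℂ) (hy : (Function.support y).Finite) :
    (Function.support fun ab : SIdx p q × SIdx p q =>
      koz ab.1 ab.2 * xi α ab.1 * y ab.2 * c γ ab.1 ab.2).Finite := by
  apply Set.Finite.subset ((Set.finite_singleton α).prod hy)
  intro ab hab
  rw [Function.mem_support] at hab
  refine ⟨?_, ?_⟩
  · by_contra h
    rw [Set.mem_singleton_iff] at h
    exact hab (by simp [xi, h])
  · by_contra h
    rw [Function.mem_support, not_not] at h
    exact hab (by rw [h]; ring)

lemma mu_xi_support (c : SIdx p q → SIdx p q → SIdx p q → ℂ)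
    (hcont : ∀ α β : SIdx p q, {γ : SIdx p q | c γ α β ≠ 0}.Finite)
    (α : SIdx p q) (v : SIdx p q → ℂ) (hv : (Function.support v).Finite) :
    (Function.support (mu c (xi α) v)).Finite := by
  apply Set.Finite.subset (hv.biUnion (fun b _ => hcont α b))
  intro γ hγ
  rw [Function.mem_support] at hγ
  by_contra hno
  apply hγ
  unfold mu
  rw [finsum_congr (g := fun _ => (0 : ℂ)) ?_, finsum_zero]
  intro ab
  by_cases h1 : ab.1 = α
  · by_cases h2 : v ab.2 = 0
    · rw [h2]; ring
    · have hc : c γ α ab.2 = 0 := by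
        by_contra hc
        exact hno (Set.mem_biUnion (Function.mem_support.2 h2) hc)
      rw [h1, hc]; ring
  · have : xi α ab.1 = 0 := if_neg h1
    rw [this]; ring

lemma mu_xi_add (c : SIdx p q → SIdx p q → SIdx p q → ℂ) (α : SIdx p q)
    (y z : SIdx p q → ℂ) (hy : (Function.support y).Finite)
    (hz : (Function.support z).Finite) :
    mu c (xi α) (y + z) = mu c (xi α) y + mu c (xi α) z := by
  funext γ
  show mu c (xi α) (y + z) γ = mu c (xi α) y γ + mu c (xi α) z γ
  unfold mu
  rw [← finsum_add_distrib (mu_summand_support c α γ y hy) (mu_summand_support c α γ z hz)]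
  apply finsum_congr
  intro ab
  show koz ab.1 ab.2 * xi α ab.1 * (y ab.2 + z ab.2) * c γ ab.1 ab.2 = _
  ring

lemma mu_xi_smul (c : SIdx p q → SIdx p q → SIdx p q → ℂ) (α : SIdx p q)
    (s : ℂ) (y : SIdx p q → ℂ) :
    mu c (xi α) (s • y) = s • mu c (xi α) y := by
  funext γ
  show mu c (xi α) (s • y) γ = s * mu c (xi α) y γ
  unfold mu
  rw [← smul_eq_mul, smul_finsum]
  apply finsum_congr
  intro ab
  show koz ab.1 ab.2 * xi α ab.1 * (s * y ab.2) * c γ ab.1 ab.2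
      = s • (koz ab.1 ab.2 * xi α ab.1 * y ab.2 * c γ ab.1 ab.2)
  rw [smul_eq_mul]
  ring

lemma mu_xi_zero (c : SIdx p q → SIdx p q → SIdx p q → ℂ) (α : SIdx p q) :
    mu c (xi α) (0 : SIdx p q → ℂ) = 0 := by
  funext γ
  show mu c (xi α) (0 : SIdx p q → ℂ) γ = 0
  unfold mu
  rw [finsum_congr (g := fun _ => (0 : ℂ)) ?_, finsum_zero]
  intro ab
  show koz ab.1 ab.2 * xi α ab.1 * (0 : SIdx p q → ℂ) ab.2 * c γ ab.1 ab.2 = 0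
  simp


lemma M_support (c : SIdx p q → SIdx p q → SIdx p q → ℂ)
    (hcont : ∀ α β : SIdx p q, {γ : SIdx p q | c γ α β ≠ 0}.Finite) :
    ∀ n, ∀ v ∈ M c n, (Function.support v).Finite := by
  intro n
  induction n with
  | zero =>
    rintro v hv
    rw [M, Set.mem_singleton_iff] at hv
    subst hv
    exact xi_support_finite _
  | succ n IHn =>
    rintro v ⟨α, hα, w, hw, rfl⟩
    exact mu_xi_support c hcont α w (IHn w hw)

lemma decompose (γ : SIdx p q) (h : γ ≠ zeroIdx) :
    ∃ α β : SIdx p q, deg α = 1 ∧ oddDisjoint α.2 β.2 ∧ merge α β = γ := by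
  by_cases hA : γ.1 = 0
  · have hex : ∃ j, γ.2 j = true := by
      by_contra hno
      push_neg at hno
      refine h (Prod.ext hA (funext fun k => ?_))
      have := hno k
      show γ.2 k = false
      rcases hgk : γ.2 k with _ | _
      · rfl
      · exact absurd hgk this
    obtain ⟨j, hj⟩ := hex
    refine ⟨(0, fun k => decide (k = j)), (γ.1, fun k => γ.2 k && !(decide (k = j))), ?_, ?_, ?_⟩
    · unfold deg oddCard
      simp [Finset.filter_eq']
    · rintro k ⟨h1, h2⟩
      have h1' : decide (k = j) = true := h1
      rw [decide_eq_true_iff] at h1'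
      subst h1'
      have h2' : (γ.2 k && !(decide (k = k))) = true := h2
      simp at h2'
    · refine Prod.ext (zero_add _) (funext fun k => ?_)
      show (decide (k = j) || (γ.2 k && !(decide (k = j)))) = γ.2 k
      by_cases hk : k = j
      · subst hk; simp [hj]
      · simp [hk]
  · have hex : ∃ i, γ.1 i ≠ 0 := by
      by_contra hno
      push_neg at hno
      exact hA (Finsupp.ext fun k => by simpa using hno k)
    obtain ⟨i, hi⟩ := hex
    have hle : Finsupp.single i 1 ≤ γ.1 := Finsupp.single_le_iff.2 (by omega)
    refine ⟨(Finsupp.single i 1, fun _ => false), (γ.1 - Finsupp.single i 1, γ.2), ?_,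
      oddDisjoint_false_left _, ?_⟩
    · unfold deg oddCard
      rw [Finsupp.sum_single_index rfl]
      simp
    · exact Prod.ext (add_tsub_cancel_of_le hle) (funext fun k => Bool.false_or _)

lemma koz_ne_zero (α β : SIdx p q) : koz α β ≠ 0 :=
  pow_ne_zero _ (neg_ne_zero.2 one_ne_zero)

lemma sgn_ne_zero (a b : Fin q → Bool) : sgn a b ≠ 0 :=
  pow_ne_zero _ (neg_ne_zero.2 one_ne_zero)

lemma binomC_ne_zero (α β : SIdx p q) : binomC α β ≠ 0 := by
  unfold binomC
  rw [Finset.prod_ne_zero_iff]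
  intro i _
  exact Nat.cast_ne_zero.2 (Nat.choose_pos (Nat.le_add_right _ _)).ne'

lemma fin_supp_mem (c : SIdx p q → SIdx p q → SIdx p q → ℂ)
    (w : SIdx p q → ℂ) (hw : (Function.support w).Finite)
    (hmem : ∀ δ ∈ Function.support w, xi δ ∈ Submodule.span ℂ (⋃ n, M c n)) :
    w ∈ Submodule.span ℂ (⋃ n, M c n) := by
  classical
  have hrepr : w = ∑ δ ∈ hw.toFinset, w δ • xi δ := by
    funext γ
    rw [Finset.sum_apply]
    have : ∀ δ ∈ hw.toFinset, (w δ • xi δ) γ = if γ = δ then w δ else 0 := by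
      intro δ _
      show w δ • (if γ = δ then (1 : ℂ) else 0) = _
      rw [smul_eq_mul, mul_ite, mul_one, mul_zero]
    rw [Finset.sum_congr rfl this, Finset.sum_ite_eq]
    by_cases hγ : γ ∈ hw.toFinset
    · rw [if_pos hγ]
    · rw [if_neg hγ]
      rw [Set.Finite.mem_toFinset, Function.mem_support, not_not] at hγ
      exact hγ
  rw [hrepr]
  refine Submodule.sum_mem _ fun δ hδ => Submodule.smul_mem _ _ ?_
  exact hmem δ (hw.mem_toFinset.1 hδ)

lemma span_mul (c : SIdx p q → SIdx p q → SIdx p q → ℂ)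
    (hcont : ∀ α β : SIdx p q, {γ : SIdx p q | c γ α β ≠ 0}.Finite)
    (α : SIdx p q) (hα : deg α = 1) (v : SIdx p q → ℂ)
    (hv : v ∈ Submodule.span ℂ (⋃ n, M c n)) :
    (Function.support v).Finite ∧ mu c (xi α) v ∈ Submodule.span ℂ (⋃ n, M c n) := by
  refine Submodule.span_induction ?_ ?_ ?_ ?_ hv
  · rintro x hx
    rw [Set.mem_iUnion] at hx
    obtain ⟨n, hn⟩ := hx
    refine ⟨M_support c hcont n x hn, Submodule.subset_span ?_⟩
    rw [Set.mem_iUnion]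
    exact ⟨n + 1, ⟨α, hα, x, hn, rfl⟩⟩
  · refine ⟨by rw [Function.support_zero]; exact Set.finite_empty, ?_⟩
    rw [mu_xi_zero]
    exact Submodule.zero_mem _
  · rintro x y hxs hys ⟨hx, hxm⟩ ⟨hy, hym⟩
    refine ⟨(hx.union hy).subset (Function.support_add _ _), ?_⟩
    rw [mu_xi_add c α x y hx hy]
    exact Submodule.add_mem _ hxm hym
  · rintro a x hxs ⟨hx, hxm⟩
    refine ⟨hx.subset (Function.support_const_smul_subset a x), ?_⟩
    rw [mu_xi_smul]
    exact Submodule.smul_mem _ _ hxm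


lemma partA (c : SIdx p q → SIdx p q → SIdx p q → ℂ)
    (hcounitl : ∀ γ β : SIdx p q, c γ zeroIdx β = if γ = β then 1 else 0)
    (hcounitr : ∀ γ α : SIdx p q, c γ α zeroIdx = if γ = α then 1 else 0)
    (hhom : ∀ γ γ' α β : SIdx p q,
      (if oddDisjoint γ.2 γ'.2 then sgn γ.2 γ'.2 * c (merge γ γ') α β else 0)
        = ∑ᶠ x : (SIdx p q × SIdx p q) × SIdx p q × SIdx p q,
            comb x.1.1 x.1.2 α * comb x.2.1 x.2.2 β *
              ((-1 : ℂ) ^ (oddCard x.2.1 * oddCard x.1.2)) *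
              c γ x.1.1 x.2.1 * c γ' x.1.2 x.2.2)
    (α β γ : SIdx p q) (h : deg α + deg β ≤ deg γ) :
    mu c (xi α) (xi β) γ =
      if oddDisjoint α.2 β.2 ∧ γ = merge α β
      then koz α β * sgn α.2 β.2 * binomC α β else 0 := by
  rw [mu_xi_xi, key c hcounitl hcounitr hhom (deg γ) γ α β rfl h, mul_ite, mul_zero,
    ← mul_assoc]

lemma xi_mem (c : SIdx p q → SIdx p q → SIdx p q → ℂ)
    (hcont : ∀ α β : SIdx p q, {γ : SIdx p q | c γ α β ≠ 0}.Finite)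
    (hcounitl : ∀ γ β : SIdx p q, c γ zeroIdx β = if γ = β then 1 else 0)
    (hcounitr : ∀ γ α : SIdx p q, c γ α zeroIdx = if γ = α then 1 else 0)
    (hhom : ∀ γ γ' α β : SIdx p q,
      (if oddDisjoint γ.2 γ'.2 then sgn γ.2 γ'.2 * c (merge γ γ') α β else 0)
        = ∑ᶠ x : (SIdx p q × SIdx p q) × SIdx p q × SIdx p q,
            comb x.1.1 x.1.2 α * comb x.2.1 x.2.2 β *
              ((-1 : ℂ) ^ (oddCard x.2.1 * oddCard x.1.2)) *
              c γ x.1.1 x.2.1 * c γ' x.1.2 x.2.2) :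
    ∀ n, ∀ γ : SIdx p q, deg γ ≤ n → xi γ ∈ Submodule.span ℂ (⋃ m, M c m) := by
  intro n
  induction n with
  | zero =>
    intro γ h
    have h0 : γ = zeroIdx := (deg_eq_zero_iff γ).1 (Nat.le_zero.1 h)
    subst h0
    exact Submodule.subset_span (Set.mem_iUnion.2 ⟨0, rfl⟩)
  | succ n IHn =>
    intro γ hγle
    by_cases hle : deg γ ≤ n
    · exact IHn γ hle
    have hdeg : deg γ = n + 1 := by omega
    have hγ0 : γ ≠ zeroIdx := by
      intro h
      have := (deg_eq_zero_iff γ).2 h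
      omega
    obtain ⟨α, β, hα1, hdisj, hm⟩ := decompose γ hγ0
    have hβdeg : deg β = n := by
      have h := deg_merge α β hdisj
      rw [hm] at h
      omega
    have hxiβ : xi β ∈ Submodule.span ℂ (⋃ m, M c m) := IHn β (by omega)
    have hmuS := (span_mul c hcont α hα1 (xi β) hxiβ).2
    set k : ℂ := koz α β * sgn α.2 β.2 * binomC α β with hk
    have hk0 : k ≠ 0 :=
      mul_ne_zero (mul_ne_zero (koz_ne_zero _ _) (sgn_ne_zero _ _)) (binomC_ne_zero _ _)
    have hmufin : (Function.support (mu c (xi α) (xi β))).Finite :=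
      mu_xi_support c hcont α (xi β) (xi_support_finite β)
    have hefin : (Function.support (mu c (xi α) (xi β) - k • xi γ)).Finite :=
      (hmufin.union ((xi_support_finite γ).subset
        (Function.support_const_smul_subset k _))).subset (Function.support_sub _ _)
    have hesupp : ∀ δ ∈ Function.support (mu c (xi α) (xi β) - k • xi γ), deg δ ≤ n := by
      intro δ hδ
      by_contra hgt
      rw [Function.mem_support] at hδ
      apply hδ
      have hge : deg α + deg β ≤ deg δ := by omega
      have hval := partA c hcounitl hcounitr hhom α β δ hge
      show mu c (xi α) (xi β) δ - (k • xi γ) δ = 0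
      rw [hval]
      show _ - k • (if δ = γ then (1 : ℂ) else 0) = 0
      by_cases hδγ : δ = γ
      · subst hδγ
        rw [if_pos ⟨hdisj, hm.symm⟩, if_pos rfl, smul_eq_mul, mul_one, sub_self]
      · rw [if_neg (fun hc => hδγ (hc.2.trans hm)), if_neg hδγ, smul_eq_mul, mul_zero,
          sub_zero]
    have heS : mu c (xi α) (xi β) - k • xi γ ∈ Submodule.span ℂ (⋃ m, M c m) :=
      fin_supp_mem c _ hefin (fun δ hδ => IHn δ (hesupp δ hδ))
    have hkxiS : k • xi γ ∈ Submodule.span ℂ (⋃ m, M c m) := by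
      have h2 : k • xi γ = mu c (xi α) (xi β) - (mu c (xi α) (xi β) - k • xi γ) := by
        rw [sub_sub_cancel]
      rw [h2]
      exact Submodule.sub_mem _ hmuS heS
    have h3 : xi γ = k⁻¹ • (k • xi γ) := by
      rw [smul_smul, inv_mul_cancel₀ hk0, one_smul]
    rw [h3]
    exact Submodule.smul_mem _ _ hkxiS


end Stmt6

open Stmt6 in
theorem stmt_6 (p q : ℕ) (c : SIdx p q → SIdx p q → SIdx p q → ℂ)
    -- continuity of `Δ`:
    (hcont : ∀ α β : SIdx p q, {γ : SIdx p q | c γ α β ≠ 0}.Finite)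
    -- counit axioms `(ε ⊗ 1) ∘ Δ = id = (1 ⊗ ε) ∘ Δ`:
    (hcounitl : ∀ γ β : SIdx p q, c γ zeroIdx β = if γ = β then 1 else 0)
    (hcounitr : ∀ γ α : SIdx p q, c γ α zeroIdx = if γ = α then 1 else 0)
    -- `Δ(1) = 1 ⊗ 1`:
    (hone : ∀ α β : SIdx p q,
      c zeroIdx α β = if α = zeroIdx ∧ β = zeroIdx then 1 else 0)
    -- coassociativity:
    (hcoassoc : ∀ γ α β δ : SIdx p q,
      ∑ᶠ τ : SIdx p q, c γ τ δ * c τ α β = ∑ᶠ τ : SIdx p q, c γ α τ * c τ β δ)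
    -- `Δ` is a superalgebra homomorphism (Koszul signs explicit):
    (hhom : ∀ γ γ' α β : SIdx p q,
      (if oddDisjoint γ.2 γ'.2 then sgn γ.2 γ'.2 * c (merge γ γ') α β else 0)
        = ∑ᶠ x : (SIdx p q × SIdx p q) × SIdx p q × SIdx p q,
            comb x.1.1 x.1.2 α * comb x.2.1 x.2.2 β *
              ((-1 : ℂ) ^ (oddCard x.2.1 * oddCard x.1.2)) *
              c γ x.1.1 x.2.1 * c γ' x.1.2 x.2.2) :
    -- (a) the product formula: leading term of `ξ_α ⋅ ξ_β`
    (∀ α β γ : SIdx p q, deg α + deg β ≤ deg γ →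
      mu c (xi α) (xi β) γ =
        if oddDisjoint α.2 β.2 ∧ γ = merge α β
        then koz α β * sgn α.2 β.2 * binomC α β else 0) ∧
    -- (a') the lower degree terms contain no constant term `ξ_0`:
    (∀ α β : SIdx p q, ¬(α = zeroIdx ∧ β = zeroIdx) →
      mu c (xi α) (xi β) zeroIdx = 0) ∧
    -- (b) the `ξ_α` with `|α| = 1` generate `U_F` as a superalgebra:
    (∀ x : SIdx p q →₀ ℂ, (x : SIdx p q → ℂ) ∈ Submodule.span ℂ (⋃ n, M c n)) := by
  refine ⟨?_, ?_, ?_⟩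
  · intro α β γ h
    exact partA c hcounitl hcounitr hhom α β γ h
  · intro α β h
    rw [mu_xi_xi, hone, if_neg h, mul_zero]
  · intro x
    refine fin_supp_mem c _ x.finite_support fun δ _ => ?_
    exact xi_mem c hcont hcounitl hcounitr hhom (deg δ) δ le_rfl
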